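/- Conservation of total probability mass (precise form of Remark 3): Assume the generator property Σ_{i∈S} T_{ji} = 0 for every j ∈ S, and assume that (G + F_i) M^{−1} v = 0 (as a column vector in ℝ^N) for every i ∈ S. If the coefficient functions satisfy the ODE system (d/dt) α_i(t) = Σ_{j∈S} α_j(t) T_{ji} + c_i α_i(t)(G + F_i) M^{−1} for all i ∈ S and t ≥ 0, then the total mass Σ_{i∈S} α_i(t)·v = Σ_{i∈S} ∫_{[x_1,x_K]} u_i(x,t) dx is constant in t; in particular Σ_{i∈S} ∫_{[x_1,x_K]} u_i(x,t) dx = Σ_{i∈S} ∫_{[x_1,x_K]} u_i(x,0) dx for all t ≥ 0. -/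

import Mathlib

open Filter Topology Set MeasureTheory intervalIntegral Matrix

/-- The DG mass matrix `M`: block diagonal with `[M^k]_{pn} = ∫_{D_k} φ_p^k φ_n^k`. -/
noncomputable def dgMass (m : ℕ) (x : Fin (m + 1) → ℝ) (Nb : Fin m → ℕ)
    (φ : (k : Fin m) → Fin (Nb k) → ℝ → ℝ) :
    Matrix ((k : Fin m) × Fin (Nb k)) ((k : Fin m) × Fin (Nb k)) ℝ :=
  fun p q =>
    if p.1 = q.1 then
      ∫ y in (x p.1.castSucc)..(x p.1.succ), φ p.1 p.2 y * φ q.1 q.2 y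
    else 0

/-- The DG stiffness matrix `G`: block diagonal with `[G^k]_{pn} = ∫_{D_k} φ_p^k (φ_n^k)'`. -/
noncomputable def dgStiff (m : ℕ) (x : Fin (m + 1) → ℝ) (Nb : Fin m → ℕ)
    (φ φ' : (k : Fin m) → Fin (Nb k) → ℝ → ℝ) :
    Matrix ((k : Fin m) × Fin (Nb k)) ((k : Fin m) × Fin (Nb k)) ℝ :=
  fun p q =>
    if p.1 = q.1 then
      ∫ y in (x p.1.castSucc)..(x p.1.succ), φ p.1 p.2 y * φ' q.1 q.2 y
    else 0

/-- **Conservation of total probability mass** (precise form of Remark 3).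
DG stencil with `m = K - 1 ≥ 1` meshes `D_k = [x k.castSucc, x k.succ]`, integrable basis
functions `φ k n` vanishing outside their mesh (derivatives `φ' k n` on the mesh), mass
matrix `M` invertible, `v` the vector of mesh integrals `v_(k,n) = ∫_{D_k} φ_n^k`.
Assume the generator property `∑ᵢ T_{ji} = 0` for every `j`, and `(G + Fᵢ) M⁻¹ v = 0`
for every phase `i`.  If the coefficients satisfy the ODE system
`(d/dt) αᵢ(t) = ∑ⱼ αⱼ(t) T_{ji} + cᵢ αᵢ(t)(G + Fᵢ)M⁻¹` for all `i` and `t ≥ 0`, then the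
total mass `∑ᵢ αᵢ(t)·v = ∑ᵢ ∫_{[x_1,x_K]} uᵢ(x,t) dx` is constant in `t ≥ 0`; in
particular `∑ᵢ ∫_{[x_1,x_K]} uᵢ(x,t) dx = ∑ᵢ ∫_{[x_1,x_K]} uᵢ(x,0) dx` for all `t ≥ 0`. -/
theorem dg_mass_conservation
    (m : ℕ) (hm : 1 ≤ m)
    (x : Fin (m + 1) → ℝ) (hx : ∀ k : Fin m, x k.castSucc < x k.succ)
    (Nb : Fin m → ℕ) (hNb : ∀ k, 1 ≤ Nb k)
    (φ φ' : (k : Fin m) → Fin (Nb k) → ℝ → ℝ)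
    (hsupp : ∀ k n (y : ℝ), y ∉ Set.Icc (x k.castSucc) (x k.succ) → φ k n y = 0)
    (hIntble : ∀ k n, IntervalIntegrable (φ k n) volume (x k.castSucc) (x k.succ))
    (ι : Type) [Fintype ι] [Nonempty ι]
    (T : ι → ι → ℝ) (c : ι → ℝ) (hc : ∀ i, c i ≠ 0)
    (hTgen : ∀ j, ∑ i, T j i = 0)
    (hMunit : IsUnit (dgMass m x Nb φ))
    (F : ι → Matrix ((k : Fin m) × Fin (Nb k)) ((k : Fin m) × Fin (Nb k)) ℝ)
    (v : ((k : Fin m) × Fin (Nb k)) → ℝ)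
    (hv : ∀ q : (k : Fin m) × Fin (Nb k),
      v q = ∫ y in (x q.1.castSucc)..(x q.1.succ), φ q.1 q.2 y)
    (hflux : ∀ i, ((dgStiff m x Nb φ φ' + F i) * (dgMass m x Nb φ)⁻¹) *ᵥ v = 0)
    (α α' : ι → ℝ → ((k : Fin m) × Fin (Nb k)) → ℝ)
    (hα : ∀ i t q, HasDerivAt (fun s => α i s q) (α' i t q) t)
    (u : ι → ℝ → ℝ → ℝ)
    (hu : ∀ i y t, u i y t = ∑ q : (k : Fin m) × Fin (Nb k), α i t q * φ q.1 q.2 y)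
    (hODE : ∀ i t, 0 ≤ t → ∀ q, α' i t q
      = (∑ j, α j t q * T j i)
        + c i * ((α i t) ᵥ* ((dgStiff m x Nb φ φ' + F i) * (dgMass m x Nb φ)⁻¹)) q) :
    (∀ t, 0 ≤ t → ∑ i, (α i t) ⬝ᵥ v = ∑ i, (α i 0) ⬝ᵥ v) ∧
    (∀ t, 0 ≤ t →
      ∑ i, (∫ y in (x 0)..(x (Fin.last m)), u i y t)
        = ∑ i, (∫ y in (x 0)..(x (Fin.last m)), u i y 0)) := by
  have hmono : StrictMono x := Fin.strictMono_iff_lt_succ.mpr hx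
  have hL : ∀ (k : Fin m) (n : Fin (Nb k)),
      ∀ᵐ y ∂(volume : Measure ℝ), y ∈ Set.uIoc (x 0) (x k.castSucc) → φ k n y = 0 := by
    intro k n
    have hne : ∀ᵐ y ∂(volume : Measure ℝ), y ≠ x k.castSucc := by
      rw [ae_iff]
      simpa [not_not] using Real.volume_singleton (a := x k.castSucc)
    filter_upwards [hne] with y hy hyI
    have hle : x 0 ≤ x k.castSucc := hmono.monotone (Fin.zero_le _)
    rw [Set.uIoc_of_le hle] at hyI
    have hylt : y < x k.castSucc := lt_of_le_of_ne hyI.2 hy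
    exact hsupp k n y (fun hmem => absurd hmem.1 (not_le.mpr hylt))
  have hR : ∀ (k : Fin m) (n : Fin (Nb k)),
      ∀ᵐ y ∂(volume : Measure ℝ), y ∈ Set.uIoc (x k.succ) (x (Fin.last m)) → φ k n y = 0 := by
    intro k n
    refine Filter.Eventually.of_forall (fun y hyI => ?_)
    have hle : x k.succ ≤ x (Fin.last m) := hmono.monotone (Fin.le_last _)
    rw [Set.uIoc_of_le hle] at hyI
    exact hsupp k n y (fun hmem => absurd hmem.2 (not_le.mpr hyI.1))
  have hIL : ∀ (k : Fin m) (n : Fin (Nb k)),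
      IntervalIntegrable (φ k n) volume (x 0) (x k.castSucc) := by
    intro k n
    have hae : φ k n =ᵐ[volume.restrict (Set.uIoc (x 0) (x k.castSucc))] (fun _ => (0 : ℝ)) :=
      (ae_restrict_iff' measurableSet_uIoc).mpr
        (by filter_upwards [hL k n] with y hy hyI using hy hyI)
    exact (_root_.intervalIntegrable_const (c := (0 : ℝ))).congr_ae hae.symm
  have hIR : ∀ (k : Fin m) (n : Fin (Nb k)),
      IntervalIntegrable (φ k n) volume (x k.succ) (x (Fin.last m)) := by
    intro k n
    have hae : φ k n =ᵐ[volume.restrict (Set.uIoc (x k.succ) (x (Fin.last m)))] (fun _ => (0 : ℝ)) :=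
      (ae_restrict_iff' measurableSet_uIoc).mpr
        (by filter_upwards [hR k n] with y hy hyI using hy hyI)
    exact (_root_.intervalIntegrable_const (c := (0 : ℝ))).congr_ae hae.symm
  have hIw : ∀ (k : Fin m) (n : Fin (Nb k)),
      IntervalIntegrable (φ k n) volume (x 0) (x (Fin.last m)) := by
    intro k n
    exact ((hIL k n).trans (hIntble k n)).trans (hIR k n)
  have hint : ∀ q : (k : Fin m) × Fin (Nb k),
      (∫ y in (x 0)..(x (Fin.last m)), φ q.1 q.2 y) = v q := by
    intro q
    obtain ⟨k, n⟩ := q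
    have e1 : (∫ y in (x 0)..(x k.castSucc), φ k n y) = 0 := by
      rw [intervalIntegral.integral_congr_ae (g := fun _ => (0 : ℝ)) (hL k n)]
      simp
    have e2 : (∫ y in (x k.succ)..(x (Fin.last m)), φ k n y) = 0 := by
      rw [intervalIntegral.integral_congr_ae (g := fun _ => (0 : ℝ)) (hR k n)]
      simp
    have s1 := intervalIntegral.integral_add_adjacent_intervals (hIL k n) (hIntble k n)
    have s2 := intervalIntegral.integral_add_adjacent_intervals
      ((hIL k n).trans (hIntble k n)) (hIR k n)
    rw [hv ⟨k, n⟩]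
    rw [← s2, ← s1, e1, e2]
    ring
  have hd : ∀ t : ℝ, HasDerivAt (fun s => ∑ i, (α i s) ⬝ᵥ v)
      (∑ i, ∑ q, α' i t q * v q) t := by
    intro t
    simp only [dotProduct]
    exact HasDerivAt.fun_sum fun i _ => HasDerivAt.fun_sum fun q _ => (hα i t q).mul_const _
  have hderiv0 : ∀ t : ℝ, 0 ≤ t → (∑ i, ∑ q, α' i t q * v q) = 0 := by
    intro t ht
    have hflux0 : ∀ i, (∑ q, ((α i t) ᵥ*
        ((dgStiff m x Nb φ φ' + F i) * (dgMass m x Nb φ)⁻¹)) q * v q) = 0 := by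
      intro i
      have : (∑ q, ((α i t) ᵥ*
          ((dgStiff m x Nb φ φ' + F i) * (dgMass m x Nb φ)⁻¹)) q * v q)
          = ((α i t) ᵥ* ((dgStiff m x Nb φ φ' + F i) * (dgMass m x Nb φ)⁻¹)) ⬝ᵥ v := rfl
      rw [this, ← Matrix.dotProduct_mulVec, hflux i, dotProduct_zero]
    have hTzero : ∀ (q : (k : Fin m) × Fin (Nb k)) (j : ι),
        ∑ i, α j t q * T j i * v q = 0 := by
      intro q j
      have : ∑ i, α j t q * T j i * v q = (α j t q * v q) * ∑ i, T j i := by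
        rw [Finset.mul_sum]
        exact Finset.sum_congr rfl fun i _ => by ring
      rw [this, hTgen, mul_zero]
    have hstep : ∀ i, ∑ q, α' i t q * v q
        = (∑ q, ∑ j, α j t q * T j i * v q)
          + c i * ∑ q, ((α i t) ᵥ*
              ((dgStiff m x Nb φ φ' + F i) * (dgMass m x Nb φ)⁻¹)) q * v q := by
      intro i
      calc ∑ q, α' i t q * v q
          = ∑ q, ((∑ j, α j t q * T j i * v q)
              + c i * (((α i t) ᵥ*
                ((dgStiff m x Nb φ φ' + F i) * (dgMass m x Nb φ)⁻¹)) q * v q)) := by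
            refine Finset.sum_congr rfl fun q _ => ?_
            rw [hODE i t ht q, add_mul, Finset.sum_mul, mul_assoc]
        _ = _ := by rw [Finset.sum_add_distrib, ← Finset.mul_sum]
    calc ∑ i, ∑ q, α' i t q * v q
        = ∑ i, ((∑ q, ∑ j, α j t q * T j i * v q)
            + c i * ∑ q, ((α i t) ᵥ*
              ((dgStiff m x Nb φ φ' + F i) * (dgMass m x Nb φ)⁻¹)) q * v q) :=
          Finset.sum_congr rfl fun i _ => hstep i
      _ = ∑ i, ∑ q, ∑ j, α j t q * T j i * v q := by
          refine Finset.sum_congr rfl fun i _ => ?_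
          rw [hflux0 i, mul_zero, add_zero]
      _ = ∑ q, ∑ j, ∑ i, α j t q * T j i * v q := by
          rw [Finset.sum_comm]
          exact Finset.sum_congr rfl fun q _ => Finset.sum_comm
      _ = 0 := by simp [hTzero]
  have hcons : ∀ t, 0 ≤ t → ∑ i, (α i t) ⬝ᵥ v = ∑ i, (α i 0) ⬝ᵥ v := by
    intro t ht
    have hcont : ContinuousOn (fun s => ∑ i, (α i s) ⬝ᵥ v) (Set.Icc 0 t) :=
      (continuous_iff_continuousAt.mpr fun s => (hd s).continuousAt).continuousOn
    exact constant_of_has_deriv_right_zero hcont (fun s hs => by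
      have h := (hd s).hasDerivWithinAt (s := Set.Ici s)
      rwa [hderiv0 s hs.1] at h) t (Set.mem_Icc.mpr ⟨ht, le_rfl⟩)
  refine ⟨hcons, ?_⟩
  have hInt_u : ∀ i t, (∫ y in (x 0)..(x (Fin.last m)), u i y t) = (α i t) ⬝ᵥ v := by
    intro i t
    have h1 : (∫ y in (x 0)..(x (Fin.last m)), u i y t)
        = ∫ y in (x 0)..(x (Fin.last m)),
            ∑ q : (k : Fin m) × Fin (Nb k), α i t q * φ q.1 q.2 y := by
      apply intervalIntegral.integral_congr
      intro y _
      exact hu i y t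
    rw [h1, intervalIntegral.integral_finset_sum
      (f := fun (q : (k : Fin m) × Fin (Nb k)) y => α i t q * φ q.1 q.2 y)
      (fun q _ => (hIw q.1 q.2).const_mul (α i t q))]
    have h2 : ∀ q : (k : Fin m) × Fin (Nb k),
        (∫ y in (x 0)..(x (Fin.last m)), α i t q * φ q.1 q.2 y) = α i t q * v q := by
      intro q
      rw [intervalIntegral.integral_const_mul, hint q]
    simp only [dotProduct]
    exact Finset.sum_congr rfl fun q _ => h2 q
  intro t ht
  simp only [hInt_u]
  exact hcons t ht
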